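/- The total length of an admissable sequence of integers is at most 4 times its range, where the range is the difference between the maximum and minimum integers visited by the sequence. -/

import Mathlib

/-- `HasHeight x h` : the 2-adic valuation of `x` is exactly `h`. -/
def HasHeight (x : ℤ) (h : ℕ) : Prop := ∃ k : ℤ, x = (2 * k + 1) * 2 ^ h

/-- A height-monotone sequence of integers `i 0, …, i (m-1)` with heights `h`. -/
def HeightMonotone (m : ℕ) (i : ℕ → ℤ) (h : ℕ → ℕ) : Prop :=
  (∀ j < m, HasHeight (i j) (h j)) ∧
  (∀ j, j + 1 < m → h (j + 1) < h j) ∧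
  (∀ j, j + 1 < m → |i (j + 1) - i j| < 2 ^ (h j))

lemma step_bounds {m : ℕ} {i : ℕ → ℤ} {h : ℕ → ℕ}
    (H : HeightMonotone m i h) {j : ℕ} (hj : j + 1 < m) :
    (2:ℤ) ^ h (j+1) ≤ |i (j+1) - i j| ∧
      |i (j+1) - i j| ≤ 2 ^ h j - 2 ^ h (j+1) := by
  obtain ⟨Hh, Hdec, Hstep⟩ := H
  obtain ⟨a, ha⟩ := Hh j (by omega)
  obtain ⟨b, hb⟩ := Hh (j+1) hj
  have hlt : h (j+1) < h j := Hdec j hj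
  set e := h j - h (j+1) with he
  have hje : h j = h (j+1) + e := by omega
  have hd : i (j+1) - i j = 2 ^ h (j+1) * ((2*b+1) - (2*a+1) * 2 ^ e) := by
    rw [ha, hb, hje, pow_add]; ring
  set c : ℤ := (2*b+1) - (2*a+1) * 2 ^ e with hc
  have hodd : Odd c := by
    obtain ⟨e', he'⟩ : ∃ e', e = e' + 1 := ⟨e - 1, by omega⟩
    exact ⟨b - (2*a+1)*2^e', by rw [hc, he', pow_succ]; ring⟩
  have hc0 : c ≠ 0 := by
    intro h0
    rw [h0] at hodd
    exact (Int.not_odd_iff_even.mpr Even.zero) hodd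
  have hc1 : 1 ≤ |c| := Int.one_le_abs (by simpa using hc0)
  have hpow : (0:ℤ) < 2 ^ h (j+1) := pow_pos two_pos _
  have habs : |i (j+1) - i j| = 2 ^ h (j+1) * |c| := by
    rw [hd, abs_mul, abs_of_nonneg hpow.le]
  constructor
  · rw [habs]; nlinarith
  · have hupper : |i (j+1) - i j| < 2 ^ h j := Hstep j hj
    rw [habs] at hupper ⊢
    rw [hje, pow_add] at hupper ⊢
    have hclt : |c| < 2 ^ e := by
      by_contra hcon
      push_neg at hcon
      nlinarith
    have hcle : |c| ≤ 2 ^ e - 1 := by omega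
    nlinarith

lemma hm_sum {m : ℕ} (hm : 2 ≤ m) {i : ℕ → ℤ} {h : ℕ → ℕ}
    (H : HeightMonotone m i h) {M l : ℤ} (hb : ∀ k < m, l ≤ i k ∧ i k ≤ M) :
    ∑ k ∈ Finset.range (m-1), |i (k+1) - i k| ≤ 2 * (M - l) := by
  have hm1 : m - 1 = (m - 2) + 1 := by omega
  rw [hm1, Finset.sum_range_succ']
  have hsum : ∑ k ∈ Finset.range (m-2), |i (k+1+1) - i (k+1)|
      ≤ 2 ^ (h 1) - 2 ^ (h (m-1)) := by
    have htel := Finset.sum_range_sub' (fun k => (2:ℤ) ^ h (k+1)) (m-2)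
    have hend : m - 2 + 1 = m - 1 := by omega
    calc ∑ k ∈ Finset.range (m-2), |i (k+1+1) - i (k+1)|
        ≤ ∑ k ∈ Finset.range (m-2), ((2:ℤ) ^ h (k+1) - 2 ^ h (k+1+1)) := by
          apply Finset.sum_le_sum
          intro k hk
          have hk' : (k+1) + 1 < m := by
            have := Finset.mem_range.mp hk; omega
          exact (step_bounds H hk').2
      _ = 2 ^ h 1 - 2 ^ h (m-1) := by rw [htel, hend]
  have h1m : 1 + 1 ≤ m := hm
  have hs0 : (2:ℤ) ^ h (0+1) ≤ |i (0+1) - i 0| := (step_bounds H (by omega : 0 + 1 < m)).1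
  have hb0 := hb 0 (by omega)
  have hb1 := hb 1 (by omega)
  have habs : |i (0+1) - i 0| ≤ M - l := by
    rw [abs_sub_le_iff]
    constructor <;> [linarith [hb0.1, hb1.2]; linarith [hb0.2, hb1.1]]
  have hpos : (1:ℤ) ≤ 2 ^ h (m-1) := one_le_pow₀ one_le_two
  try simp only [Nat.add_eq, Nat.add_zero] at *
  linarith

/-- An admissable sequence is the concatenation of a reversed height-monotone
sequence `jseq` (from `m* = jseq 0` to `m1`) with a height-monotone sequence
`iseq` (from `m* = iseq 0` to `m2`).  Its total length (which equals the sum of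
the step lengths of the two constituent sequences) is at most `4` times its
range `M - l`, for any bounds `l ≤ · ≤ M` on all the integers visited. -/
theorem admissable_length_le_four_mul_range
    (q m : ℕ) (hq : 2 ≤ q) (hm : 2 ≤ m)
    (jseq iseq : ℕ → ℤ) (hj hi : ℕ → ℕ)
    (hstart : jseq 0 = iseq 0)
    (hHMj : HeightMonotone q jseq hj) (hHMi : HeightMonotone m iseq hi)
    (M l : ℤ)
    (hMj : ∀ k < q, l ≤ jseq k ∧ jseq k ≤ M)
    (hMi : ∀ k < m, l ≤ iseq k ∧ iseq k ≤ M) :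
    (∑ k ∈ Finset.range (q - 1), |jseq (k + 1) - jseq k|) +
      (∑ k ∈ Finset.range (m - 1), |iseq (k + 1) - iseq k|) ≤ 4 * (M - l) := by
  have h1 := hm_sum hq hHMj hMj
  have h2 := hm_sum hm hHMi hMi
  linarith
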